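/- Let M = [[α, xᵀ],[y, B]] be a square matrix with α a scalar, x, y column vectors, and B a square matrix. Then rank(M) = rank(B) if and only if the column vector (α, y) is in the column space of the matrix [xᵀ; B] (the matrix with first row xᵀ stacked above B) and the row vector (α, xᵀ) is in the row space of the matrix [y, B] (the matrix with first column y adjoined to B). -/

import Mathlib

open Matrix Module Submodule

private lemma rank_rows {F : Type*} [Field F] {a b : Type*} [Fintype a] [Fintype b]
    (A : Matrix a b F) : A.rank = finrank F (span F (Set.range A)) := by
  rw [A.rank_eq_finrank_span_row]; rfl

/-- rank(M) = rank(B) iff (α,y) ∈ colspace([xᵀ;B]) and (α,xᵀ) ∈ rowspace([y,B]). -/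
theorem stmt_2 {F : Type*} [Field F] {m : ℕ}
    (B : Matrix (Fin m) (Fin m) F) (x y : Fin m → F) (α : F)
    (M : Matrix (Fin 1 ⊕ Fin m) (Fin 1 ⊕ Fin m) F)
    (hM : M = Matrix.fromBlocks (Matrix.of fun _ _ => α) (Matrix.of fun _ j => x j)
      (Matrix.of fun i _ => y i) B)
    -- [xᵀ; B] : the matrix with first row xᵀ stacked above B
    (N : Matrix (Fin 1 ⊕ Fin m) (Fin m) F)
    (hN : N = Matrix.of (Sum.elim (fun _ => x) B))
    -- [y, B] : the matrix with first column y adjoined to B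
    (P : Matrix (Fin m) (Fin 1 ⊕ Fin m) F)
    (hP : P = Matrix.of fun i => Sum.elim (fun _ => y i) (B i)) :
    M.rank = B.rank ↔
      (Sum.elim (fun _ => α) y) ∈ Submodule.span F (Set.range Nᵀ) ∧
      (Sum.elim (fun _ => α) x) ∈ Submodule.span F (Set.range P) := by
  set v : (Fin 1 ⊕ Fin m) → F := Sum.elim (fun _ => α) y with hv
  set w : (Fin 1 ⊕ Fin m) → F := Sum.elim (fun _ => α) x with hw
  -- columns of M = v together with columns of N
  have hMT : Set.range Mᵀ = insert v (Set.range Nᵀ) := by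
    ext u
    constructor
    · rintro ⟨(k | j), rfl⟩
      · left
        funext i
        cases i <;> simp [hM, hv]
      · right
        exact ⟨j, by funext i; cases i <;> simp [hM, hN] <;> rfl⟩
    · rintro (rfl | ⟨j, rfl⟩)
      · exact ⟨Sum.inl 0, by funext i; cases i <;> simp [hM, hv]⟩
      · exact ⟨Sum.inr j, by funext i; cases i <;> simp [hM, hN] <;> rfl⟩
  -- rows of M = w together with rows of P
  have hMrows : Set.range M = insert w (Set.range P) := by
    ext u
    constructor
    · rintro ⟨(k | i), rfl⟩
      · left
        funext j
        cases j <;> simp [hM, hw]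
      · right
        exact ⟨i, by funext j; cases j <;> simp [hM, hP]⟩
    · rintro (rfl | ⟨i, rfl⟩)
      · exact ⟨Sum.inl 0, by funext j; cases j <;> simp [hM, hw]⟩
      · exact ⟨Sum.inr i, by funext j; cases j <;> simp [hM, hP]⟩
  -- rows of N = x together with rows of B
  have hNrows : Set.range N = insert x (Set.range B) := by
    ext u
    constructor
    · rintro ⟨(k | i), rfl⟩
      · left; rw [hN]; rfl
      · right; exact ⟨i, by rw [hN]; rfl⟩
    · rintro (rfl | ⟨i, rfl⟩)
      · exact ⟨Sum.inl 0, by rw [hN]; rfl⟩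
      · exact ⟨Sum.inr i, by rw [hN]; rfl⟩
  -- columns of P = y together with columns of B
  have hPT : Set.range Pᵀ = insert y (Set.range Bᵀ) := by
    ext u
    constructor
    · rintro ⟨(k | j), rfl⟩
      · left; funext i; simp [hP]
      · right; exact ⟨j, by funext i; simp [hP]⟩
    · rintro (rfl | ⟨j, rfl⟩)
      · exact ⟨Sum.inl 0, by funext i; simp [hP]⟩
      · exact ⟨Sum.inr j, by funext i; simp [hP]⟩
  constructor
  · intro h
    have hBN : B.rank ≤ N.rank := by
      rw [rank_rows B, rank_rows N, hNrows]
      exact Submodule.finrank_mono (span_mono (Set.subset_insert _ _))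
    have hNM : N.rank ≤ M.rank := by
      rw [N.rank_eq_finrank_span_cols, M.rank_eq_finrank_span_cols,
        show Set.range M.col = Set.range Mᵀ from rfl, hMT]
      exact Submodule.finrank_mono (span_mono (Set.subset_insert _ _))
    have hBP : B.rank ≤ P.rank := by
      rw [← B.rank_transpose, ← P.rank_transpose, rank_rows Bᵀ, rank_rows Pᵀ, hPT]
      exact Submodule.finrank_mono (span_mono (Set.subset_insert _ _))
    have hPM : P.rank ≤ M.rank := by
      rw [rank_rows P, rank_rows M, hMrows]
      exact Submodule.finrank_mono (span_mono (Set.subset_insert _ _))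
    have hNMeq : N.rank = M.rank := le_antisymm hNM (by omega)
    have hPMeq : P.rank = M.rank := le_antisymm hPM (by omega)
    have hspan1 : span F (Set.range Nᵀ) = span F (Set.range Mᵀ) := by
      refine Submodule.eq_of_le_of_finrank_eq (span_mono ?_) ?_
      · rw [hMT]; exact Set.subset_insert _ _
      · rw [show Set.range Nᵀ = Set.range N.col from rfl, show Set.range Mᵀ = Set.range M.col from rfl,
          ← N.rank_eq_finrank_span_cols, ← M.rank_eq_finrank_span_cols, hNMeq]
    have hspan2 : span F (Set.range P) = span F (Set.range M) := by
      refine Submodule.eq_of_le_of_finrank_eq (span_mono ?_) ?_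
      · rw [hMrows]; exact Set.subset_insert _ _
      · rw [← rank_rows P, ← rank_rows M, hPMeq]
    constructor
    · rw [hspan1]
      exact subset_span (by rw [hMT]; exact Set.mem_insert _ _)
    · rw [hspan2]
      exact subset_span (by rw [hMrows]; exact Set.mem_insert _ _)
  · rintro ⟨h1, h2⟩
    -- x is in the row space of B
    have hx : x ∈ span F (Set.range B) := by
      have hf : (LinearMap.funLeft F F (Sum.inr : Fin m → Fin 1 ⊕ Fin m)) w = x := by
        funext i; simp [hw, LinearMap.funLeft]
      have hPB : (LinearMap.funLeft F F (Sum.inr : Fin m → Fin 1 ⊕ Fin m)) '' Set.range P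
          = Set.range B := by
        have hcomp : ⇑(LinearMap.funLeft F F (Sum.inr : Fin m → Fin 1 ⊕ Fin m)) ∘ P = B := by
          funext i j
          simp [hP, LinearMap.funLeft]
          rfl
        exact (Set.range_comp _ _).symm.trans (congrArg Set.range hcomp)
      have := Submodule.mem_map_of_mem
        (f := LinearMap.funLeft F F (Sum.inr : Fin m → Fin 1 ⊕ Fin m)) h2
      rw [← Submodule.span_image, hPB, hf] at this
      exact this
    have e1 : span F (Set.range Mᵀ) = span F (Set.range Nᵀ) := by
      rw [hMT]; exact Submodule.span_insert_eq_span h1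
    have e2 : span F (Set.range N) = span F (Set.range B) := by
      rw [hNrows]; exact Submodule.span_insert_eq_span hx
    rw [M.rank_eq_finrank_span_cols, show Set.range M.col = Set.range Mᵀ from rfl, e1,
      show Set.range Nᵀ = Set.range N.col from rfl, ← N.rank_eq_finrank_span_cols,
      rank_rows N, e2, ← rank_rows B]
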